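/- arXiv:2202.10349 — 3 statements merged into one kernel-verified Lean document; each statement's English description precedes it below -/
import Mathlib

section
/- Recursion theorem for Hoare triples: given ψ and φ such that (1) for every ψ' satisfying all contracts of φ, every procedure body ψ(y) satisfies its contract under ψ', and (2) for every ψ', if ψ' satisfies all contracts of φ then ⊨_{ψ'} {P} c {Q}, then ⊨_ψ {P} c {Q} holds. -/
/-- Memory states map addresses to natural-number values. -/
abbrev State := ℕ → ℕ

/-- Pointwise update σ[i/n]. -/
def upd (σ : State) (i n : ℕ) : State := fun j => if j = i then n else σ j

/-- Arithmetic expressions. -/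
inductive Aexp : Type
  | const (n : ℕ)
  | loc (i : ℕ)
  | deref (i : ℕ)
  | addr (i : ℕ)
  | add (a b : Aexp)
  | mul (a b : Aexp)
  | sub (a b : Aexp)

/-- Evaluation of arithmetic expressions (truncated subtraction on ℕ). -/
def evalA : Aexp → State → ℕ
  | .const n, _ => n
  | .loc i, σ => σ i
  | .deref i, σ => σ (σ i)
  | .addr i, _ => i
  | .add a b, σ => evalA a σ + evalA b σ
  | .mul a b, σ => evalA a σ * evalA b σ
  | .sub a b, σ => evalA a σ - evalA b σ

/-- Boolean expressions. -/
inductive Bexp : Type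
  | tt
  | ff
  | le (a b : Aexp)
  | eq (a b : Aexp)
  | and (x y : Bexp)
  | or (x y : Bexp)
  | not (x : Bexp)

/-- Evaluation of Boolean expressions. -/
def evalB : Bexp → State → Bool
  | .tt, _ => true
  | .ff, _ => false
  | .le a b, σ => decide (evalA a σ ≤ evalA b σ)
  | .eq a b, σ => decide (evalA a σ = evalA b σ)
  | .and x y, σ => evalB x σ && evalB y σ
  | .or x y, σ => evalB x σ || evalB y σ
  | .not x, σ => ! evalB x σ

/-- Assertions are predicates on memory states. -/
abbrev Assertion := State → Prop

/-- Procedure names. -/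
abbrev ProcName := ℕ

/-- Commands of the While language with procedures, assertions and aliasing. -/
inductive Com : Type
  | skip
  | assign (i : ℕ) (a : Aexp)
  | assignDeref (i : ℕ) (a : Aexp)
  | seq (c₁ c₂ : Com)
  | assert (P : Assertion)
  | ite (b : Bexp) (c₁ c₂ : Com)
  | while (b : Bexp) (inv : Assertion) (c : Com)
  | call (y : ProcName)

/-- Procedure environments map procedure names to bodies. -/
abbrev ProcEnv := ProcName → Com

/-- A procedure contract: precondition and postcondition. -/
structure Contract where
  pre : Assertion
  post : Assertion

/-- Contract environments. -/
abbrev ContractEnv := ProcName → Contract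

/-- Big-step operational semantics ⟨c, σ⟩ ⇓_ψ σ'. -/
inductive BigStep (ψ : ProcEnv) : Com → State → State → Prop
  | skip {σ} : BigStep ψ .skip σ σ
  | assign {i a σ} : BigStep ψ (.assign i a) σ (upd σ i (evalA a σ))
  | assignDeref {i a σ} : BigStep ψ (.assignDeref i a) σ (upd σ (σ i) (evalA a σ))
  | seq {c₁ c₂ σ σ' σ''} : BigStep ψ c₁ σ σ' → BigStep ψ c₂ σ' σ'' →
      BigStep ψ (.seq c₁ c₂) σ σ''
  | assert {P σ} : BigStep ψ (.assert P) σ σ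
  | iteTrue {b c₁ c₂ σ σ'} : evalB b σ = true → BigStep ψ c₁ σ σ' →
      BigStep ψ (.ite b c₁ c₂) σ σ'
  | iteFalse {b c₁ c₂ σ σ'} : evalB b σ = false → BigStep ψ c₂ σ σ' →
      BigStep ψ (.ite b c₁ c₂) σ σ'
  | whileTrue {b inv c σ σ' σ''} : evalB b σ = true → BigStep ψ c σ σ' →
      BigStep ψ (.while b inv c) σ' σ'' → BigStep ψ (.while b inv c) σ σ''
  | whileFalse {b inv c σ} : evalB b σ = false → BigStep ψ (.while b inv c) σ σ
  | call {y σ σ'} : BigStep ψ (ψ y) σ σ' → BigStep ψ (.call y) σ σ'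

/-- Semantic Hoare triple ⊨_ψ {P} c {Q}. -/
def Hoare (ψ : ProcEnv) (P : Assertion) (c : Com) (Q : Assertion) : Prop :=
  ∀ σ σ', P σ → BigStep ψ c σ σ' → Q σ'

/-- All procedure contracts of φ are valid under ψ. -/
def ContractsValid (ψ : ProcEnv) (φ : ContractEnv) : Prop :=
  ∀ y, Hoare ψ (φ y).pre (.call y) (φ y).post

/-- Main verification-condition generator. -/
def Tc : Com → State → ContractEnv → Assertion → Prop
  | .skip, σ, _, f => ∀ σ', σ' = σ → f σ'
  | .assign i a, σ, _, f => ∀ σ', σ' = upd σ i (evalA a σ) → f σ'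
  | .assignDeref i a, σ, _, f => ∀ σ', σ' = upd σ (σ i) (evalA a σ) → f σ'
  | .seq c₀ c₁, σ, φ, f => Tc c₀ σ φ (fun σ' => Tc c₁ σ' φ f)
  | .assert P, σ, _, f => ∀ σ', σ' = σ ∧ P σ → f σ'
  | .ite b c₀ c₁, σ, φ, f =>
      (evalB b σ = true → Tc c₀ σ φ f) ∧ (¬ evalB b σ = true → Tc c₁ σ φ f)
  | .while b inv _c, σ, _φ, f =>
      inv σ → ∀ σ', inv σ' ∧ ¬ evalB b σ' = true → f σ'
  | .call y, σ, φ, f => (φ y).pre σ → ∀ σ', (φ y).post σ' → f σ'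

/-- Auxiliary verification-condition generator. -/
def Ta : Com → State → ContractEnv → Prop
  | .skip, _, _ => True
  | .assign _ _, _, _ => True
  | .assignDeref _ _, _, _ => True
  | .seq c₀ c₁, σ, φ => Ta c₀ σ φ ∧ Tc c₀ σ φ (fun σ' => Ta c₁ σ' φ)
  | .assert P, σ, _ => P σ
  | .ite b c₀ c₁, σ, φ =>
      (evalB b σ = true → Ta c₀ σ φ) ∧ (¬ evalB b σ = true → Ta c₁ σ φ)
  | .while b inv c, σ, φ =>
      inv σ ∧ (∀ σ', inv σ' ∧ evalB b σ' = true → Ta c σ' φ) ∧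
        (∀ σ', inv σ' ∧ evalB b σ' = true → Tc c σ' φ inv)
  | .call y, σ, φ => (φ y).pre σ

/-- Procedure verification condition. -/
def Tf (φ : ContractEnv) (ψ : ProcEnv) : Prop :=
  ∀ y σ, (φ y).pre σ → Ta (ψ y) σ φ ∧ Tc (ψ y) σ φ (φ y).post

/-- Relational assertions over sequences of memory states. -/
abbrev RAssertion := List State → Prop

/-- Relational VC generator; the head of the list is the last command/state (cₙ, σₙ). -/
def Tr : List Com → List State → ContractEnv → RAssertion → Prop
  | [], [], _, Q => Q []
  | c :: cs, σ :: σs, φ, Q =>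
      Tc c σ φ (fun σ' => Tr cs σs φ (fun σs' => Q (σ' :: σs')))
  | _, _, _, _ => False

/-- Auxiliary relational obligations: conjunction of Ta over all commands. -/
def Tar : List Com → List State → ContractEnv → Prop
  | [], [], _ => True
  | c :: cs, σ :: σs, φ => Ta c σ φ ∧ Tar cs σs φ
  | _, _, _ => False

/-- Pointwise execution of a sequence of commands. -/
def ExecAll (ψ : ProcEnv) : List Com → List State → List State → Prop
  | [], [], [] => True
  | c :: cs, σ :: σs, σ' :: σs' => BigStep ψ c σ σ' ∧ ExecAll ψ cs σs σs'
  | _, _, _ => False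

/-- A command that never terminates. -/
def diverge : Com := .while .tt (fun _ => True) .skip

/-- Call-freeness. -/
def CF : Com → Prop
  | .seq c d => CF c ∧ CF d
  | .ite _ c d => CF c ∧ CF d
  | .while _ _ c => CF c
  | .call _ => False
  | _ => True

/-- Substitute procedure bodies for calls. -/
def subst (τ : ProcEnv) : Com → Com
  | .skip => .skip
  | .assign i a => .assign i a
  | .assignDeref i a => .assignDeref i a
  | .seq c d => .seq (subst τ c) (subst τ d)
  | .assert P => .assert P
  | .ite b c d => .ite b (subst τ c) (subst τ d)
  | .while b inv c => .while b inv (subst τ c)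
  | .call y => τ y

lemma cf_subst {τ : ProcEnv} (hτ : ∀ y, CF (τ y)) : ∀ c, CF (subst τ c)
  | .skip => trivial
  | .assign _ _ => trivial
  | .assignDeref _ _ => trivial
  | .seq c d => ⟨cf_subst hτ c, cf_subst hτ d⟩
  | .assert _ => trivial
  | .ite _ c d => ⟨cf_subst hτ c, cf_subst hτ d⟩
  | .while _ _ c => cf_subst hτ c
  | .call y => hτ y

lemma subst_cf_id {τ : ProcEnv} : ∀ {c}, CF c → subst τ c = c
  | .skip, _ => rfl
  | .assign _ _, _ => rfl
  | .assignDeref _ _, _ => rfl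
  | .seq _ _, h => by simp [subst, subst_cf_id h.1, subst_cf_id h.2]
  | .assert _, _ => rfl
  | .ite _ _ _, h => by simp [subst, subst_cf_id h.1, subst_cf_id h.2]
  | .while _ _ c, h => by
    have := subst_cf_id (τ := τ) (c := c) h
    simp [subst, this]
  | .call _, h => absurd h (by simp [CF])

/-- Call-free commands run identically in any environment. -/
lemma cf_bigstep {χ χ' : ProcEnv} {c σ σ'} (h : BigStep χ c σ σ') (hc : CF c) :
    BigStep χ' c σ σ' := by
  induction h with
  | skip => exact .skip
  | assign => exact .assign
  | assignDeref => exact .assignDeref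
  | seq _ _ ih1 ih2 => exact .seq (ih1 hc.1) (ih2 hc.2)
  | assert => exact .assert
  | iteTrue hb _ ih => exact .iteTrue hb (ih hc.1)
  | iteFalse hb _ ih => exact .iteFalse hb (ih hc.2)
  | whileTrue hb _ _ ih1 ih2 => exact .whileTrue hb (ih1 hc) (ih2 hc)
  | whileFalse hb => exact .whileFalse hb
  | call _ _ => exact absurd hc (by simp [CF])

lemma bigstep_subst {τ χ : ProcEnv} (hτ : ∀ y, CF (τ y)) {c σ σ'}
    (h : BigStep τ c σ σ') : BigStep χ (subst τ c) σ σ' := by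
  induction h with
  | skip => exact .skip
  | assign => exact .assign
  | assignDeref => exact .assignDeref
  | seq _ _ ih1 ih2 => exact .seq ih1 ih2
  | assert => exact .assert
  | iteTrue hb _ ih => exact .iteTrue hb ih
  | iteFalse hb _ ih => exact .iteFalse hb ih
  | whileTrue hb _ _ ih1 ih2 => exact .whileTrue hb ih1 ih2
  | whileFalse hb => exact .whileFalse hb
  | @call y σ₀ σ₀' _ ih =>
    rw [subst_cf_id (hτ y)] at ih
    exact ih

lemma bigstep_subst_rev {τ χ : ProcEnv} (hτ : ∀ y, CF (τ y)) :
    ∀ {d σ σ'}, BigStep χ d σ σ' → ∀ c, subst τ c = d → BigStep τ c σ σ' := by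
  intro d σ σ' h
  induction h with
  | @skip σ =>
    intro c hc
    cases c <;> simp [subst] at hc
    · exact .skip
    · rename_i y; exact .call (cf_bigstep (χ := χ) (by rw [hc]; exact BigStep.skip) (hτ y))
  | @assign i a σ =>
    intro c hc
    cases c <;> simp [subst] at hc
    · obtain ⟨rfl, rfl⟩ := hc; exact .assign
    · rename_i y; exact .call (cf_bigstep (χ := χ) (by rw [hc]; exact BigStep.assign) (hτ y))
  | @assignDeref i a σ =>
    intro c hc
    cases c <;> simp [subst] at hc
    · obtain ⟨rfl, rfl⟩ := hc; exact .assignDeref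
    · rename_i y; exact .call (cf_bigstep (χ := χ) (by rw [hc]; exact BigStep.assignDeref) (hτ y))
  | @seq c₁ c₂ σ σ' σ'' h1 h2 ih1 ih2 =>
    intro c hc
    cases c <;> simp [subst] at hc
    · obtain ⟨e1, e2⟩ := hc; exact .seq (ih1 _ e1) (ih2 _ e2)
    · rename_i y; exact .call (cf_bigstep (χ := χ) (by rw [hc]; exact BigStep.seq h1 h2) (hτ y))
  | @assert P σ =>
    intro c hc
    cases c <;> simp [subst] at hc
    · rw [hc]; exact .assert
    · rename_i y; exact .call (cf_bigstep (χ := χ) (by rw [hc]; exact BigStep.assert) (hτ y))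
  | @iteTrue b c₁ c₂ σ σ' hb h1 ih =>
    intro c hc
    cases c <;> simp [subst] at hc
    · obtain ⟨rfl, e1, e2⟩ := hc; exact .iteTrue hb (ih _ e1)
    · rename_i y; exact .call (cf_bigstep (χ := χ) (by rw [hc]; exact BigStep.iteTrue hb h1) (hτ y))
  | @iteFalse b c₁ c₂ σ σ' hb h1 ih =>
    intro c hc
    cases c <;> simp [subst] at hc
    · obtain ⟨rfl, e1, e2⟩ := hc; exact .iteFalse hb (ih _ e2)
    · rename_i y; exact .call (cf_bigstep (χ := χ) (by rw [hc]; exact BigStep.iteFalse hb h1) (hτ y))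
  | @whileTrue b inv c₀ σ σ' σ'' hb h1 h2 ih1 ih2 =>
    intro c hc
    cases c <;> simp [subst] at hc
    · obtain ⟨rfl, rfl, e⟩ := hc
      exact .whileTrue hb (ih1 _ e) (ih2 _ (by simp [subst, e]))
    · rename_i y; exact .call (cf_bigstep (χ := χ) (by rw [hc]; exact BigStep.whileTrue hb h1 h2) (hτ y))
  | @whileFalse b inv c₀ σ hb =>
    intro c hc
    cases c <;> simp [subst] at hc
    · obtain ⟨rfl, rfl, e⟩ := hc; exact .whileFalse hb
    · rename_i y; exact .call (cf_bigstep (χ := χ) (by rw [hc]; exact BigStep.whileFalse hb) (hτ y))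
  | @call y₀ σ σ' h1 ih =>
    intro c hc
    cases c <;> simp [subst] at hc
    rename_i y
    exact absurd (hτ y) (by rw [hc]; simp [CF])

/-- The n-th call-free approximation of ψ. -/
def env (ψ : ProcEnv) : ℕ → ProcEnv
  | 0 => fun _ => diverge
  | n + 1 => fun y => subst (env ψ n) (ψ y)

lemma cf_env (ψ : ProcEnv) : ∀ n y, CF (env ψ n y)
  | 0, _ => trivial
  | n + 1, y => cf_subst (cf_env ψ n) (ψ y)

lemma diverge_no_step {χ : ProcEnv} {c σ σ'} (h : BigStep χ c σ σ') :
    c ≠ diverge := by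
  induction h with
  | whileTrue hb _ _ _ ih2 => exact ih2
  | whileFalse hb =>
    intro e
    unfold diverge at e
    injection e with e1 e2 e3
    subst e1
    simp [evalB] at hb
  | skip => simp [diverge]
  | assign => simp [diverge]
  | assignDeref => simp [diverge]
  | seq _ _ _ _ => simp [diverge]
  | assert => simp [diverge]
  | iteTrue _ _ _ => simp [diverge]
  | iteFalse _ _ _ => simp [diverge]
  | call _ _ => simp [diverge]

lemma env_mono (ψ : ProcEnv) : ∀ n {c σ σ'},
    BigStep (env ψ n) c σ σ' → BigStep (env ψ (n + 1)) c σ σ' := by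
  intro n
  induction n with
  | zero =>
    intro c σ σ' h
    induction h with
    | skip => exact .skip
    | assign => exact .assign
    | assignDeref => exact .assignDeref
    | seq _ _ ih1 ih2 => exact .seq ih1 ih2
    | assert => exact .assert
    | iteTrue hb _ ih => exact .iteTrue hb ih
    | iteFalse hb _ ih => exact .iteFalse hb ih
    | whileTrue hb _ _ ih1 ih2 => exact .whileTrue hb ih1 ih2
    | whileFalse hb => exact .whileFalse hb
    | call h _ => exact absurd rfl (diverge_no_step h)
  | succ m ih =>
    intro c σ σ' h
    induction h with
    | skip => exact .skip
    | assign => exact .assign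
    | assignDeref => exact .assignDeref
    | seq _ _ ih1 ih2 => exact .seq ih1 ih2
    | assert => exact .assert
    | iteTrue hb _ ihh => exact .iteTrue hb ihh
    | iteFalse hb _ ihh => exact .iteFalse hb ihh
    | whileTrue hb _ _ ih1 ih2 => exact .whileTrue hb ih1 ih2
    | whileFalse hb => exact .whileFalse hb
    | @call y σ₀ σ₀' h _ =>
      have h' : BigStep (env ψ m) (ψ y) _ _ :=
        bigstep_subst_rev (cf_env ψ m) h _ rfl
      exact .call (bigstep_subst (cf_env ψ (m + 1)) (ih h'))

lemma env_le (ψ : ProcEnv) {n m : ℕ} (hnm : n ≤ m) {c σ σ'}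
    (h : BigStep (env ψ n) c σ σ') : BigStep (env ψ m) c σ σ' := by
  induction m with
  | zero => exact Nat.le_zero.mp hnm ▸ h
  | succ k ih =>
    rcases Nat.lt_or_ge n (k + 1) with hk | hk
    · exact env_mono ψ k (ih (Nat.lt_succ_iff.mp hk))
    · exact (Nat.le_antisymm hnm hk) ▸ h

lemma bigstep_approx (ψ : ProcEnv) {c σ σ'} (h : BigStep ψ c σ σ') :
    ∃ n, BigStep (env ψ n) c σ σ' := by
  induction h with
  | skip => exact ⟨0, .skip⟩
  | assign => exact ⟨0, .assign⟩
  | assignDeref => exact ⟨0, .assignDeref⟩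
  | seq _ _ ih1 ih2 =>
    obtain ⟨n1, h1⟩ := ih1; obtain ⟨n2, h2⟩ := ih2
    exact ⟨max n1 n2, .seq (env_le ψ (Nat.le_max_left _ _) h1)
      (env_le ψ (Nat.le_max_right _ _) h2)⟩
  | assert => exact ⟨0, .assert⟩
  | iteTrue hb _ ih => obtain ⟨n, h1⟩ := ih; exact ⟨n, .iteTrue hb h1⟩
  | iteFalse hb _ ih => obtain ⟨n, h1⟩ := ih; exact ⟨n, .iteFalse hb h1⟩
  | whileTrue hb _ _ ih1 ih2 =>
    obtain ⟨n1, h1⟩ := ih1; obtain ⟨n2, h2⟩ := ih2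
    exact ⟨max n1 n2, .whileTrue hb (env_le ψ (Nat.le_max_left _ _) h1)
      (env_le ψ (Nat.le_max_right _ _) h2)⟩
  | whileFalse hb => exact ⟨0, .whileFalse hb⟩
  | call _ ih =>
    obtain ⟨n, h1⟩ := ih
    exact ⟨n + 1, .call (bigstep_subst (cf_env ψ n) h1)⟩

theorem hoare_recursion (ψ : ProcEnv) (φ : ContractEnv) (P Q : Assertion) (c : Com)
    (h₁ : ∀ ψ' : ProcEnv, ContractsValid ψ' φ →
      ∀ y, Hoare ψ' (φ y).pre (ψ y) (φ y).post)
    (h₂ : ∀ ψ' : ProcEnv, ContractsValid ψ' φ → Hoare ψ' P c Q) :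
    Hoare ψ P c Q := by
  have cvn : ∀ n, ContractsValid (env ψ n) φ := by
    intro n
    induction n with
    | zero =>
      intro y σ σ' hpre h
      cases h with
      | call h => exact absurd rfl (diverge_no_step h)
    | succ m ih =>
      intro y σ σ' hpre h
      cases h with
      | call h =>
        exact h₁ (env ψ m) ih y σ σ' hpre (bigstep_subst_rev (cf_env ψ m) h _ rfl)
  have cv : ContractsValid ψ φ := by
    intro y σ σ' hpre h
    cases h with
    | call h =>
      obtain ⟨n, hn⟩ := bigstep_approx ψ h
      exact cvn (n + 1) y σ σ' hpre (.call (bigstep_subst (cf_env ψ n) hn))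
  exact h₂ ψ cv
end

section
/- Soundness of the main verification-condition generator Tc under contract assumptions: if for all states σ, P σ implies Ta(c, σ, φ) and P σ implies Tc(c, σ, φ, Q), then for any procedure environment ψ satisfying all contracts of φ, the Hoare triple ⊨_ψ {P} c {Q} holds. -/
lemma vcg_aux {ψ : ProcEnv} {φ : ContractEnv} (hψ : ContractsValid ψ φ)
    {c : Com} {σ σ' : State} (h : BigStep ψ c σ σ') :
    ∀ Q : Assertion, Ta c σ φ → Tc c σ φ Q → Q σ' := by
  induction h with
  | skip => intro Q _ hc; exact hc _ rfl
  | assign => intro Q _ hc; exact hc _ rfl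
  | assignDeref => intro Q _ hc; exact hc _ rfl
  | seq h1 h2 ih1 ih2 =>
    intro Q ha hc
    exact ih2 Q (ih1 _ ha.1 ha.2) (ih1 _ ha.1 hc)
  | assert => intro Q ha hc; exact hc _ ⟨rfl, ha⟩
  | iteTrue hb _ ih =>
    intro Q ha hc; exact ih Q (ha.1 hb) (hc.1 hb)
  | iteFalse hb _ ih =>
    intro Q ha hc
    exact ih Q (ha.2 (by simp [hb])) (hc.2 (by simp [hb]))
  | whileTrue hb hbody hrest ihbody ihrest =>
    intro Q ha hc
    obtain ⟨hinv, haux, hpres⟩ := ha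
    have hinv' := ihbody _ (haux _ ⟨hinv, hb⟩) (hpres _ ⟨hinv, hb⟩)
    exact ihrest Q ⟨hinv', haux, hpres⟩ (fun _ => hc (by exact hinv))
  | whileFalse hb =>
    intro Q ha hc
    exact hc ha.1 _ ⟨ha.1, by simp [hb]⟩
  | call hbody _ =>
    rename_i y σ σ' _
    intro Q ha hc
    exact hc ha _ (hψ y _ _ ha (BigStep.call hbody))

theorem vcg_sound_under_contracts (c : Com) (φ : ContractEnv) (P Q : Assertion)
    (hTa : ∀ σ, P σ → Ta c σ φ)
    (hTc : ∀ σ, P σ → Tc c σ φ Q) :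
    ∀ ψ : ProcEnv, ContractsValid ψ φ → Hoare ψ P c Q := by
  intro ψ hψ σ σ' hP hstep
  exact vcg_aux hψ hstep Q (hTa σ hP) (hTc σ hP)
end

section
/- Soundness of the VCGen for Hoare triples: if Tf(φ, ψ) holds, and for all σ, P σ implies Ta(c, σ, φ), and for all σ, P σ implies Tc(c, σ, φ, Q), then ⊨_ψ {P} c {Q}. -/
lemma vcg_key {ψ : ProcEnv} {φ : ContractEnv} (hTf : Tf φ ψ) :
    ∀ {c σ σ'}, BigStep ψ c σ σ' → ∀ Q, Ta c σ φ → Tc c σ φ Q → Q σ' := by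
  intro c σ σ' h
  induction h with
  | skip => intro Q _ htc; exact htc _ rfl
  | assign => intro Q _ htc; exact htc _ rfl
  | assignDeref => intro Q _ htc; exact htc _ rfl
  | seq h1 h2 ih1 ih2 =>
      intro Q hta htc
      exact ih2 Q (ih1 _ hta.1 hta.2) (ih1 _ hta.1 htc)
  | assert => intro Q hta htc; exact htc _ ⟨rfl, hta⟩
  | iteTrue hb _ ih => intro Q hta htc; exact ih Q (hta.1 hb) (htc.1 hb)
  | iteFalse hb _ ih =>
      intro Q hta htc
      exact ih Q (hta.2 (by simp [hb])) (htc.2 (by simp [hb]))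
  | whileTrue hb hc hw ihc ihw =>
      intro Q hta htc
      obtain ⟨hinv, hta', htc'⟩ := hta
      have hinv' := ihc _ (hta' _ ⟨hinv, hb⟩) (htc' _ ⟨hinv, hb⟩)
      exact ihw Q ⟨hinv', hta', htc'⟩ (fun _ => htc hinv)
  | whileFalse hb =>
      intro Q hta htc
      exact htc hta.1 _ ⟨hta.1, by simp [hb]⟩
  | call hbody ih =>
      intro Q hta htc
      rename_i y _ _
      obtain ⟨ha, hc⟩ := hTf y _ hta
      exact htc hta _ (ih _ ha hc)

theorem vcg_soundness (ψ : ProcEnv) (φ : ContractEnv) (c : Com) (P Q : Assertion)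
    (hTf : Tf φ ψ)
    (hTa : ∀ σ, P σ → Ta c σ φ)
    (hTc : ∀ σ, P σ → Tc c σ φ Q) :
    Hoare ψ P c Q := fun σ σ' hP h => vcg_key hTf h Q (hTa σ hP) (hTc σ hP)
end
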